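/- Let K be a field and A a K-algebra possessing a K-basis given by a subset Σ of A. Suppose that for every real number p > 1, every finite subset K' of Σ, and every positive integer N, there is a finite subset F of Σ such that |F| > N and |K'F \ {0}| < p·|F|, where K'F = {kf : k ∈ K', f ∈ F}. Then A is exhaustively amenable. -/

import Mathlib

open Pointwise

/-- A `K`-algebra `A` is exhaustively amenable if for every pair of finite-dimensional
`K`-subspaces `U, W` of `A` and every real `p > 1` there exists a finite-dimensional
`K`-subspace `V` of `A` with `W ⊆ V` and `dim_K (U*V) < p * dim_K V`.
Here `U*V` denotes the `K`-span of all products `u * v` with `u ∈ U`, `v ∈ V`. -/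
def IsExhaustivelyAmenable (K A : Type*) [Field K] [Ring A] [Algebra K A] : Prop :=
  ∀ U W : Submodule K A, FiniteDimensional K U → FiniteDimensional K W →
    ∀ p : ℝ, 1 < p →
      ∃ V : Submodule K A, FiniteDimensional K V ∧ W ≤ V ∧
        (Module.finrank K ↥(U * V) : ℝ) < p * (Module.finrank K ↥V : ℝ)

/-- Any finite-dimensional submodule is contained in the span of a finite subset of a
spanning set. -/
lemma aux_span_finset {K A : Type*} [Field K] [Ring A] [Algebra K A] {Sgm : Set A}
    (hspan : Submodule.span K Sgm = ⊤) (U : Submodule K A) (hU : FiniteDimensional K U) :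
    ∃ s : Finset A, (s : Set A) ⊆ Sgm ∧ U ≤ Submodule.span K (s : Set A) := by
  classical
  have hfg : U.FG := (Submodule.fg_iff_finiteDimensional U).mpr hU
  obtain ⟨g, hg⟩ := hfg
  choose t ht1 ht2 using fun x : g =>
    Submodule.mem_span_finite_of_mem_span
      (show (x : A) ∈ Submodule.span K Sgm from hspan ▸ Submodule.mem_top)
  refine ⟨g.attach.biUnion t, ?_, ?_⟩
  · intro a ha
    simp only [Finset.coe_biUnion, Set.mem_iUnion, Finset.mem_coe] at ha
    obtain ⟨x, -, hx⟩ := ha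
    exact ht1 x hx
  · rw [← hg, Submodule.span_le]
    intro a ha
    have : Submodule.span K ((t ⟨a, ha⟩ : Set A)) ≤
        Submodule.span K ((g.attach.biUnion t : Finset A) : Set A) := by
      apply Submodule.span_mono
      intro y hy
      simp only [Finset.coe_biUnion, Set.mem_iUnion, Finset.mem_coe]
      exact ⟨⟨a, ha⟩, Finset.mem_attach _ _, hy⟩
    exact this (ht2 ⟨a, ha⟩)

/-- Let `K` be a field and `A` a `K`-algebra with a `K`-basis given by a subset
`Sgm ⊆ A`.  Suppose that for every real `p > 1`, every finite subset `K' ⊆ Sgm`, and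
every positive integer `N`, there is a finite subset `F ⊆ Sgm` such that `|F| > N` and
`|K'F \ {0}| < p * |F|`, where `K'F = {k * f : k ∈ K', f ∈ F}`.  Then `A` is
exhaustively amenable. -/
theorem statement19 (K A : Type*) [Field K] [Ring A] [Algebra K A] (Sgm : Set A)
    (hbasis : LinearIndependent K ((↑) : Sgm → A) ∧ Submodule.span K Sgm = ⊤)
    (hcomb : ∀ p : ℝ, 1 < p → ∀ K' : Finset A, (K' : Set A) ⊆ Sgm → ∀ N : ℕ, 0 < N →
      ∃ F : Finset A, (F : Set A) ⊆ Sgm ∧ N < F.card ∧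
        ((((K' : Set A) * (F : Set A)) \ {0}).ncard : ℝ) < p * F.card) :
    IsExhaustivelyAmenable K A := by
  classical
  obtain ⟨hli, hspan⟩ := hbasis
  intro U W hU hW p hp
  obtain ⟨Ku, hKu, hUKu⟩ := aux_span_finset hspan U hU
  obtain ⟨Wu, hWu, hWWu⟩ := aux_span_finset hspan W hW
  set p' : ℝ := (p + 1) / 2 with hp'def
  have hp'1 : 1 < p' := by rw [hp'def]; linarith
  set c : ℕ := Ku.card * Wu.card with hcdef
  obtain ⟨N, hN⟩ : ∃ N : ℕ, (2 * c : ℝ) / (p - 1) < N := exists_nat_gt _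
  obtain ⟨F, hFS, hFcard, hFlt⟩ := hcomb p' hp'1 Ku hKu (N + 1) (Nat.succ_pos N)
  set V : Submodule K A := Submodule.span K ((F ∪ Wu : Finset A) : Set A) with hVdef
  have hVfd : FiniteDimensional K V := by
    rw [hVdef]; infer_instance
  refine ⟨V, hVfd, ?_, ?_⟩
  · refine le_trans hWWu (Submodule.span_mono ?_)
    rw [Finset.coe_union]
    exact Set.subset_union_right
  · -- upper bound on finrank (U * V)
    set T : Finset A := Ku * (F ∪ Wu) with hTdef
    have hUV : U * V ≤ Submodule.span K ((T.erase 0 : Finset A) : Set A) := by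
      have h1 : U * V ≤ Submodule.span K ((Ku : Set A)) * Submodule.span K ((F ∪ Wu : Finset A) : Set A) :=
        mul_le_mul' hUKu le_rfl
      have h2 : Submodule.span K ((Ku : Set A)) * Submodule.span K ((F ∪ Wu : Finset A) : Set A)
          = Submodule.span K ((T : Finset A) : Set A) := by
        rw [Submodule.span_mul_span, hTdef, Finset.coe_mul]
      have h3 : Submodule.span K ((T : Finset A) : Set A)
          ≤ Submodule.span K ((T.erase 0 : Finset A) : Set A) := by
        rw [Submodule.span_le]
        intro x hx
        rcases eq_or_ne x 0 with h | h
        · rw [h]; exact Submodule.zero_mem _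
        · exact Submodule.subset_span (by rw [Finset.coe_erase]; exact ⟨hx, h⟩)
      exact le_trans h1 (h2 ▸ h3)
    have hrank1 : Module.finrank K ↥(U * V) ≤ (T.erase 0).card := by
      have := Submodule.finrank_mono (t := Submodule.span K ((T.erase 0 : Finset A) : Set A))
        (s := U * V) hUV
      exact le_trans this (finrank_span_finset_le_card (T.erase 0))
    -- card of T.erase 0
    have hTsub : T.erase 0 ⊆ (Ku * F).erase 0 ∪ Ku * Wu := by
      intro x hx
      rw [Finset.mem_erase] at hx
      rw [hTdef, Finset.mul_union, Finset.mem_union] at hx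
      rcases hx.2 with h | h
      · exact Finset.mem_union_left _ (Finset.mem_erase.mpr ⟨hx.1, h⟩)
      · exact Finset.mem_union_right _ h
    have hcard1 : (T.erase 0).card ≤ ((Ku * F).erase 0).card + c := by
      calc (T.erase 0).card ≤ ((Ku * F).erase 0 ∪ Ku * Wu).card := Finset.card_le_card hTsub
        _ ≤ ((Ku * F).erase 0).card + (Ku * Wu).card := Finset.card_union_le _ _
        _ ≤ ((Ku * F).erase 0).card + c := by
            exact Nat.add_le_add_left (Finset.card_mul_le) _
    -- translate ncard
    have hncard : (((Ku : Set A) * (F : Set A)) \ {0}).ncard = ((Ku * F).erase 0).card := by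
      rw [← Finset.coe_mul, ← Finset.coe_erase, Set.ncard_coe_finset]
    have herase_lt : (((Ku * F).erase 0).card : ℝ) < p' * F.card := by
      rw [← hncard] at *
      exact_mod_cast hFlt
    -- lower bound on finrank V
    have hFindep : LinearIndependent K (fun x : ((F : Finset A) : Set A) => (x : A)) := LinearIndepOn.mono (show LinearIndepOn K id Sgm from hli) hFS
    have hrankF : Module.finrank K (Submodule.span K ((F : Finset A) : Set A)) = F.card :=
      finrank_span_finset_eq_card hFindep
    have hVlow : F.card ≤ Module.finrank K V := by
      rw [← hrankF]
      exact Submodule.finrank_mono (Submodule.span_mono (by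
        rw [Finset.coe_union]; exact Set.subset_union_left))
    -- final arithmetic
    have hd : ((N : ℝ) + 1) ≤ (F.card : ℝ) := by exact_mod_cast hFcard.le
    have hcd : (c : ℝ) * 2 < (p - 1) * F.card := by
      have hp1 : (0:ℝ) < p - 1 := by linarith
      rw [div_lt_iff₀ hp1] at hN
      nlinarith
    have hr : (Module.finrank K ↥(U * V) : ℝ) ≤ ((Ku * F).erase 0).card + (c : ℝ) := by
      exact_mod_cast le_trans hrank1 hcard1
    have hv : (F.card : ℝ) ≤ (Module.finrank K V : ℝ) := by exact_mod_cast hVlow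
    have hp0 : (0:ℝ) < p := by linarith
    nlinarith [herase_lt]
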